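/- Suppose that the NBDSA principle holds. Then there exists an (F_t)_{t∈[0,T]}-adapted process c = (c(t))_{t∈[0,T]} with all paths continuous, such that c(t) ∈ (0,1) a.s. for every t ∈ [0,T), c(T) = 1, and for every t ∈ [0,T] one has D(t,T) = c(t)·1_{{t<τ}} P-a.s. -/

import Mathlib

open MeasureTheory

/-- The enlarged filtration `G_t := σ(F_t ∪ I_t)`, where
`I_t := σ({τ ≤ u} : u ∈ [0,t])`. -/
def enlarge {Ω : Type*} (F : ℝ → MeasurableSpace Ω) (τ : Ω → ℝ) (t : ℝ) :
    MeasurableSpace Ω :=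
  F t ⊔ MeasurableSpace.generateFrom {A | ∃ u : ℝ, 0 ≤ u ∧ u ≤ t ∧ A = {ω | τ ω ≤ u}}

/-- The value process `V_ψ(t) = ψ^B(t)B(t,T) + ψ^D(t)D(t,T)`, with
`B(t,T) = e^{-r(T-t)}`. -/
noncomputable def BDvalue {Ω : Type*} (r T : ℝ) (D : ℝ → Ω → ℝ) (ψB ψD : ℝ → Ω → ℝ) (t : ℝ)
    (ω : Ω) : ℝ :=
  ψB t ω * Real.exp (-(r * (T - t))) + ψD t ω * D t ω

/-- `ψ = (ψB, ψD)` is a `BD`-simple self-financing strategy. -/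
def IsBDSimpleSelfFinancing {Ω : Type*} [MeasurableSpace Ω] (P : Measure Ω)
    (F : ℝ → MeasurableSpace Ω) (τ : Ω → ℝ) (D : ℝ → Ω → ℝ) (r T : ℝ)
    (ψB ψD : ℝ → Ω → ℝ) : Prop :=
  (∀ t ∈ Set.Icc (0 : ℝ) T,
    Measurable[enlarge F τ t] (ψB t) ∧ Measurable[enlarge F τ t] (ψD t)) ∧
  ∃ (N : ℕ) (s : ℕ → ℝ) (x y : ℕ → Ω → ℝ),
    0 < N ∧ s 0 = 0 ∧ s N = T ∧
    (∀ n, n < N → s n < s (n + 1)) ∧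
    (∀ n, 1 ≤ n → n ≤ N → Measurable[enlarge F τ (s (n - 1))] (x n) ∧
      Measurable[enlarge F τ (s (n - 1))] (y n)) ∧
    (∀ n, 1 ≤ n → n ≤ N → ∀ t ∈ Set.Ioc (s (n - 1)) (s n), ψB t = x n ∧ ψD t = y n) ∧
    (∀ n, n < N → ∀ᵐ ω ∂P,
      Filter.Tendsto (fun t => BDvalue r T D ψB ψD t ω)
        (nhdsWithin (s n) (Set.Ioi (s n))) (nhds (BDvalue r T D ψB ψD (s n) ω)))

/-- The no-`BD`-simple-arbitrage (NBDSA) principle. -/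
def NBDSA {Ω : Type*} [MeasurableSpace Ω] (P : Measure Ω)
    (F : ℝ → MeasurableSpace Ω) (τ : Ω → ℝ) (D : ℝ → Ω → ℝ) (r T : ℝ) : Prop :=
  ¬ ∃ ψB ψD : ℝ → Ω → ℝ, IsBDSimpleSelfFinancing P F τ D r T ψB ψD ∧
    (∀ᵐ ω ∂P, BDvalue r T D ψB ψD 0 ω = 0) ∧
    (∀ᵐ ω ∂P, 0 ≤ BDvalue r T D ψB ψD T ω) ∧
    0 < P {ω | 0 < BDvalue r T D ψB ψD T ω}

open Filter

lemma aux_enlarge_mono {Ω : Type*} {F : ℝ → MeasurableSpace Ω} {τ : Ω → ℝ} {s t : ℝ}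
    (hst : s ≤ t) (hF : F s ≤ F t) : enlarge F τ s ≤ enlarge F τ t := by
  refine sup_le_sup hF (MeasurableSpace.generateFrom_mono ?_)
  rintro A ⟨u, hu0, hus, rfl⟩
  exact ⟨u, hu0, hus.trans hst, rfl⟩

lemma aux_rc {Ω : Type*} {T : ℝ} {τ : Ω → ℝ} {D : ℝ → Ω → ℝ}
    (hτ_pos : ∀ ω, 0 < τ ω)
    (hD_cont : ∀ ω, ContinuousOn (fun t => D t ω) (Set.Icc 0 T ∩ Set.Iio (τ ω)))
    (hD_rc : ∀ ω, ∀ t ∈ Set.Icc (0 : ℝ) T, τ ω ≤ t →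
      ContinuousWithinAt (fun t => D t ω) (Set.Ici t) t)
    (ω : Ω) (v : ℝ) (hv0 : 0 ≤ v) (hvT : v < T) :
    Filter.Tendsto (fun u => D u ω) (nhdsWithin v (Set.Ioi v)) (nhds (D v ω)) := by
  by_cases hτ : τ ω ≤ v
  · exact (hD_rc ω v ⟨hv0, hvT.le⟩ hτ).mono_left
      (nhdsWithin_mono v Set.Ioi_subset_Ici_self)
  · push_neg at hτ
    have hmem : v ∈ Set.Icc 0 T ∩ Set.Iio (τ ω) := ⟨⟨hv0, hvT.le⟩, hτ⟩
    have h := (hD_cont ω) v hmem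
    have hvK : v < min T (τ ω) := lt_min hvT hτ
    rw [← nhdsWithin_Ioo_eq_nhdsGT hvK]
    refine h.mono_left (nhdsWithin_mono v fun u hu => ?_)
    exact ⟨⟨hv0.trans hu.1.le, (hu.2.trans_le (min_le_left _ _)).le⟩,
      hu.2.trans_le (min_le_right _ _)⟩

lemma aux_arb {Ω : Type*} [mΩ : MeasurableSpace Ω] (P : Measure Ω) [IsProbabilityMeasure P]
    (T r : ℝ) (hT : 0 < T)
    (F : ℝ → MeasurableSpace Ω)
    (hF_mono : ∀ s t : ℝ, 0 ≤ s → s ≤ t → t ≤ T → F s ≤ F t)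
    (τ : Ω → ℝ) (hτ_pos : ∀ ω, 0 < τ ω)
    (D : ℝ → Ω → ℝ)
    (hD_adapted : ∀ t ∈ Set.Icc (0 : ℝ) T, Measurable[enlarge F τ t] (D t))
    (hD_T : ∀ ω, D T ω = Set.indicator {ω' | T < τ ω'} (fun _ => (1 : ℝ)) ω)
    (hD_cont : ∀ ω, ContinuousOn (fun t => D t ω) (Set.Icc 0 T ∩ Set.Iio (τ ω)))
    (hD_rc : ∀ ω, ∀ t ∈ Set.Icc (0 : ℝ) T, τ ω ≤ t →
      ContinuousWithinAt (fun t => D t ω) (Set.Ici t) t)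
    (hNBDSA : NBDSA P F τ D r T)
    (t : ℝ) (ht0 : 0 ≤ t) (htT : t < T)
    (y : Ω → ℝ) (hy : Measurable[enlarge F τ t] y)
    (hg : ∀ᵐ ω ∂P, 0 ≤ -(y ω) * D t ω * Real.exp (r * (T - t))
      + y ω * Set.indicator {ω' | T < τ ω'} (fun _ => (1 : ℝ)) ω)
    (hg' : 0 < P {ω | 0 < -(y ω) * D t ω * Real.exp (r * (T - t))
      + y ω * Set.indicator {ω' | T < τ ω'} (fun _ => (1 : ℝ)) ω}) :
    False := by
  classical
  set x : Ω → ℝ := fun ω => -(y ω) * D t ω * Real.exp (r * (T - t)) with hx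
  have hxm : Measurable[enlarge F τ t] x :=
    (hy.neg.mul (hD_adapted t ⟨ht0, htT.le⟩)).mul measurable_const
  set m : ℝ := if t = 0 then T / 2 else t with hm
  have hm0 : 0 < m := by
    rw [hm]; split_ifs with h
    · linarith
    · exact lt_of_le_of_ne ht0 (Ne.symm h)
  have hmT : m < T := by
    rw [hm]; split_ifs with h
    · linarith
    · exact htT
  have htm : t ≤ m := by
    rw [hm]; split_ifs with h
    · rw [h]; linarith
    · exact le_refl t
  set ψB : ℝ → Ω → ℝ := fun u ω => if t < u then x ω else 0 with hψB
  set ψD : ℝ → Ω → ℝ := fun u ω => if t < u then y ω else 0 with hψD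
  have hcancel : ∀ ω, x ω * Real.exp (-(r * (T - t))) + y ω * D t ω = 0 := by
    intro ω
    have h1 : Real.exp (r * (T - t)) * Real.exp (-(r * (T - t))) = 1 := by
      rw [← Real.exp_add, add_neg_cancel, Real.exp_zero]
    calc x ω * Real.exp (-(r * (T - t))) + y ω * D t ω
        = -(y ω) * D t ω * (Real.exp (r * (T - t)) * Real.exp (-(r * (T - t))))
          + y ω * D t ω := by rw [hx]; ring
      _ = 0 := by rw [h1]; ring
  have hBD0 : ∀ ω, BDvalue r T D ψB ψD 0 ω = 0 := by
    intro ω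
    simp [BDvalue, hψB, hψD, not_lt.2 ht0]
  have hBDT : ∀ ω, BDvalue r T D ψB ψD T ω
      = x ω + y ω * Set.indicator {ω' | T < τ ω'} (fun _ => (1 : ℝ)) ω := by
    intro ω
    simp only [BDvalue, hψB, hψD, if_pos htT, hD_T ω]
    rw [sub_self, mul_zero, neg_zero, Real.exp_zero, mul_one]
  -- the generic tendsto fact
  have htend : ∀ ω, ∀ v, t ≤ v → v < T →
      Filter.Tendsto (fun u => BDvalue r T D ψB ψD u ω) (nhdsWithin v (Set.Ioi v))
        (nhds (x ω * Real.exp (-(r * (T - v))) + y ω * D v ω)) := by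
    intro ω v htv hvT
    have hD' := aux_rc hτ_pos hD_cont hD_rc ω v (ht0.trans htv) hvT
    have hexp : Filter.Tendsto (fun u : ℝ => Real.exp (-(r * (T - u)))) (nhdsWithin v (Set.Ioi v))
        (nhds (Real.exp (-(r * (T - v))))) := by
      have hcont : Continuous fun u : ℝ => Real.exp (-(r * (T - u))) := by fun_prop
      exact (hcont.tendsto v).mono_left nhdsWithin_le_nhds
    have base := ((hexp.const_mul (x ω)).add (hD'.const_mul (y ω)))
    refine base.congr' ?_ |>.mono_left le_rfl
    filter_upwards [eventually_mem_nhdsWithin] with u hu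
    have : t < u := lt_of_le_of_lt htv hu
    simp [BDvalue, hψB, hψD, if_pos this]
  refine hNBDSA ⟨ψB, ψD, ⟨?_, ?_⟩, ?_, ?_, ?_⟩
  · intro u hu
    constructor <;>
    · by_cases htu : t < u
      · have hle : enlarge F τ t ≤ enlarge F τ u :=
          aux_enlarge_mono htu.le (hF_mono t u ht0 htu.le hu.2)
        have : Measurable[enlarge F τ u] x := hxm.mono hle le_rfl
        have hy' : Measurable[enlarge F τ u] y := hy.mono hle le_rfl
        simp only [hψB, hψD, if_pos htu]
        first
        | exact this
        | exact hy'
      · simp only [hψB, hψD, if_neg htu]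
        exact measurable_const
  · refine ⟨2, fun n => if n = 0 then 0 else if n = 1 then m else T,
      fun n => if n ≤ 1 then (if t = 0 then x else fun _ => 0) else x,
      fun n => if n ≤ 1 then (if t = 0 then y else fun _ => 0) else y,
      two_pos, by norm_num, by norm_num, ?_, ?_, ?_, ?_⟩
    · intro n hn
      interval_cases n
      · simpa using hm0
      · simpa using hmT
    · intro n h1 h2
      interval_cases n
      · constructor <;>
        · simp only [Nat.sub_self, if_pos rfl, le_refl, if_pos]
          split_ifs with h
          · subst h; first | exact hxm | exact hy
          · exact measurable_const
      · have hle : enlarge F τ t ≤ enlarge F τ m :=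
          aux_enlarge_mono htm (hF_mono t m ht0 htm hmT.le)
        constructor <;>
        · simp only [show (2 : ℕ) - 1 = 1 from rfl, if_neg one_ne_zero, if_pos rfl]
          norm_num
          first
          | exact hxm.mono hle le_rfl
          | exact hy.mono hle le_rfl
    · intro n h1 h2 u hu
      interval_cases n
      · have hu' : 0 < u ∧ u ≤ m := by simpa using hu
        have hcase : ∀ z : Ω → ℝ, (fun ω => if t < u then z ω else 0)
            = (if t = 0 then z else fun _ => 0) := by
          intro z
          funext ω
          by_cases h : t < u
          · rw [if_pos h]
            by_cases h' : t = 0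
            · rw [if_pos h']
            · exfalso
              have hmt : m = t := by rw [hm, if_neg h']
              rw [hmt] at hu'
              exact absurd (hu'.2.trans_lt h) (lt_irrefl u)
          · rw [if_neg h]
            by_cases h' : t = 0
            · exfalso; rw [h'] at h; exact h hu'.1
            · rw [if_neg h']
        exact ⟨hcase x, hcase y⟩
      · have hu' : m < u ∧ u ≤ T := by simpa using hu
        have htu : t < u := lt_of_le_of_lt htm hu'.1
        have hcase : ∀ z : Ω → ℝ, (fun ω => if t < u then z ω else 0) = z := by
          intro z; funext ω; rw [if_pos htu]
        constructor
        · show (fun ω => if t < u then x ω else 0) = _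
          rw [hcase x]
          norm_num
        · show (fun ω => if t < u then y ω else 0) = _
          rw [hcase y]
          norm_num
    · intro n hn
      refine Filter.Eventually.of_forall fun ω => ?_
      interval_cases n
      · -- at s 0 = 0
        show Filter.Tendsto (fun u => BDvalue r T D ψB ψD u ω) (nhdsWithin 0 (Set.Ioi 0))
          (nhds (BDvalue r T D ψB ψD 0 ω))
        rw [hBD0 ω]
        by_cases ht : t = 0
        · subst ht
          have h2 := htend ω 0 le_rfl hT
          rw [hcancel ω] at h2
          exact h2
        · have ht' : 0 < t := lt_of_le_of_ne ht0 (Ne.symm ht)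
          have hev : (fun u => BDvalue r T D ψB ψD u ω)
              =ᶠ[nhdsWithin (0 : ℝ) (Set.Ioi 0)] (fun _ => (0 : ℝ)) := by
            filter_upwards [Ioo_mem_nhdsGT_of_mem (⟨le_refl 0, ht'⟩ : (0:ℝ) ∈ Set.Ico 0 t)]
              with u hu
            simp [BDvalue, hψB, hψD, if_neg (not_lt.2 hu.2.le)]
          exact Filter.Tendsto.congr' hev.symm tendsto_const_nhds
      · -- at s 1 = m
        show Filter.Tendsto (fun u => BDvalue r T D ψB ψD u ω) (nhdsWithin m (Set.Ioi m))
          (nhds (BDvalue r T D ψB ψD m ω))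
        by_cases ht : t = 0
        · have htm' : t < m := by rw [ht]; exact hm0
          have h2 := htend ω m htm hmT
          have hval : BDvalue r T D ψB ψD m ω
              = x ω * Real.exp (-(r * (T - m))) + y ω * D m ω := by
            simp [BDvalue, hψB, hψD, if_pos htm']
          rw [hval]
          exact h2
        · have hmt : m = t := by rw [hm, if_neg ht]
          have h2 := htend ω m htm hmT
          rw [hmt, hcancel ω] at h2
          have hval : BDvalue r T D ψB ψD m ω = 0 := by
            rw [hmt]
            simp [BDvalue, hψB, hψD, if_neg (lt_irrefl t)]
          rw [hval, hmt]
          exact h2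
  · exact Filter.Eventually.of_forall hBD0
  · refine hg.mono fun ω h => ?_
    rw [hBDT ω]
    exact h
  · have hset : {ω | 0 < BDvalue r T D ψB ψD T ω}
        = {ω | 0 < -(y ω) * D t ω * Real.exp (r * (T - t))
          + y ω * Set.indicator {ω' | T < τ ω'} (fun _ => (1 : ℝ)) ω} := by
      ext ω
      rw [Set.mem_setOf_eq, hBDT ω]
      rfl
    rw [hset]
    exact hg'

lemma aux_tau_le_mem {Ω : Type*} (F : ℝ → MeasurableSpace Ω) (τ : Ω → ℝ) {u t : ℝ}
    (hu0 : 0 ≤ u) (hut : u ≤ t) : MeasurableSet[enlarge F τ t] {ω | τ ω ≤ u} :=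
  le_sup_right (α := MeasurableSpace Ω) _
    (MeasurableSpace.measurableSet_generateFrom ⟨u, hu0, hut, rfl⟩)

lemma aux_set_proj {Ω : Type*} {F : ℝ → MeasurableSpace Ω} {τ : Ω → ℝ} {t : ℝ} {A : Set Ω}
    (hA : MeasurableSet[enlarge F τ t] A) :
    ∃ B, MeasurableSet[F t] B ∧ A ∩ {ω | t < τ ω} = B ∩ {ω | t < τ ω} := by
  set U := {ω | t < τ ω} with hU
  let m2 : MeasurableSpace Ω :=
    { MeasurableSet' := fun A => ∃ B, MeasurableSet[F t] B ∧ A ∩ U = B ∩ U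
      measurableSet_empty := ⟨∅, @MeasurableSet.empty Ω (F t), rfl⟩
      measurableSet_compl := by
        rintro A ⟨B, hB, hAB⟩
        refine ⟨Bᶜ, hB.compl, ?_⟩
        ext ω
        have := Set.ext_iff.1 hAB ω
        simp only [Set.mem_inter_iff, Set.mem_compl_iff] at this ⊢
        tauto
      measurableSet_iUnion := by
        intro g hg
        choose B hB hBeq using hg
        refine ⟨⋃ i, B i, MeasurableSet.iUnion hB, ?_⟩
        rw [Set.iUnion_inter, Set.iUnion_inter]
        exact Set.iUnion_congr hBeq }
  have hle : enlarge F τ t ≤ m2 := by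
    refine sup_le (fun A hA => show ∃ B, MeasurableSet[F t] B ∧ A ∩ U = B ∩ U from ⟨A, hA, rfl⟩)
      (MeasurableSpace.generateFrom_le ?_)
    rintro A ⟨u, hu0, hut, rfl⟩
    refine show ∃ B, MeasurableSet[F t] B ∧ _ ∩ U = B ∩ U from ⟨∅, @MeasurableSet.empty Ω (F t), ?_⟩
    ext ω
    simp only [Set.mem_inter_iff, Set.mem_setOf_eq, Set.mem_empty_iff_false, Set.empty_inter,
      iff_false, not_and, U]
    intro h1 h2
    exact absurd (h1.trans hut) (not_le.2 h2)
  exact hle A hA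

lemma aux_proj {Ω : Type*} {F : ℝ → MeasurableSpace Ω} {τ : Ω → ℝ} {t : ℝ} {X : Ω → ℝ}
    (hX : Measurable[enlarge F τ t] X) :
    ∃ f : Ω → ℝ, Measurable[F t] f ∧ ∀ ω, t < τ ω → X ω = f ω := by
  classical
  have hB : ∀ q : ℚ, ∃ B, MeasurableSet[F t] B ∧
      {ω | X ω < (q : ℝ)} ∩ {ω | t < τ ω} = B ∩ {ω | t < τ ω} :=
    fun q => aux_set_proj (hX measurableSet_Iio)
  choose B hBmeas hBeq using hB
  refine ⟨fun ω => (⨅ q : ℚ, if ω ∈ B q then ((q : ℝ) : EReal) else ⊤).toReal, ?_, ?_⟩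
  · apply Measurable.ereal_toReal
    apply Measurable.iInf
    intro q
    exact Measurable.ite (hBmeas q) measurable_const measurable_const
  · intro ω hω
    have hmem : ∀ q : ℚ, ω ∈ B q ↔ X ω < (q : ℝ) := by
      intro q
      have := Set.ext_iff.1 (hBeq q) ω
      simp only [Set.mem_inter_iff, Set.mem_setOf_eq] at this
      tauto
    have h1 : (⨅ q : ℚ, if ω ∈ B q then ((q : ℝ) : EReal) else ⊤) = ((X ω : ℝ) : EReal) := by
      apply le_antisymm
      · by_contra hlt
        obtain ⟨q, hq1, hq2⟩ := EReal.exists_rat_btwn_of_lt (not_le.1 hlt)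
        have hq : X ω < (q : ℝ) := EReal.coe_lt_coe_iff.1 hq1
        have : (⨅ q : ℚ, if ω ∈ B q then ((q : ℝ) : EReal) else ⊤) ≤ ((q : ℝ) : EReal) := by
          refine iInf_le_of_le q ?_
          rw [if_pos ((hmem q).2 hq)]
        exact absurd (this.trans_lt hq2) (lt_irrefl _)
      · refine le_iInf fun q => ?_
        by_cases h : ω ∈ B q
        · rw [if_pos h]
          exact EReal.coe_le_coe_iff.2 ((hmem q).1 h).le
        · rw [if_neg h]; exact le_top
    show X ω = (⨅ q : ℚ, if ω ∈ B q then ((q : ℝ) : EReal) else ⊤).toReal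
    rw [h1, EReal.toReal_coe]

lemma aux_liminf {Ω : Type*} (m : MeasurableSpace Ω) (g : ℕ → Ω → ℝ) (hg : ∀ n, Measurable[m] (g n)) :
    ∃ f : Ω → ℝ, Measurable[m] f ∧
      ∀ ω L, Filter.Tendsto (fun n => g n ω) Filter.atTop (nhds L) → f ω = L := by
  refine ⟨fun ω => (⨆ n : ℕ, ⨅ k : ℕ, ((g (k + n) ω : ℝ) : EReal)).toReal, ?_, ?_⟩
  · apply Measurable.ereal_toReal
    apply Measurable.iSup
    intro n
    apply Measurable.iInf
    intro k
    exact measurable_coe_real_ereal.comp (hg _)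
  · intro ω L hL
    have h1 : Filter.Tendsto (fun n => ((g n ω : ℝ) : EReal)) Filter.atTop (nhds (L : EReal)) :=
      EReal.tendsto_coe.2 hL
    have h2 := h1.liminf_eq
    rw [Filter.liminf_eq_iSup_iInf_of_nat'] at h2
    show (⨆ n : ℕ, ⨅ k : ℕ, ((g (k + n) ω : ℝ) : EReal)).toReal = L
    rw [h2, EReal.toReal_coe]

lemma aux_key {Ω : Type*} [mΩ : MeasurableSpace Ω] (P : Measure Ω) [IsProbabilityMeasure P]
    (T : ℝ) (F : ℝ → MeasurableSpace Ω) (hFT : F T ≤ mΩ)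
    (τ : Ω → ℝ) (hτ_meas : Measurable τ)
    (hτ_cond : ∀ s t : ℝ, 0 ≤ s → s < t →
      ∀ᵐ ω ∂P, 0 < (P[Set.indicator {ω | s < τ ω ∧ τ ω ≤ t}
        (fun _ => (1 : ℝ)) | F T]) ω)
    (s t : ℝ) (hs : 0 ≤ s) (hst : s < t) (A : Set Ω)
    (hA : MeasurableSet[F T] A) (hP : P A ≠ 0) :
    0 < P (A ∩ {ω | s < τ ω ∧ τ ω ≤ t}) := by
  set B := {ω | s < τ ω ∧ τ ω ≤ t} with hB
  have hBm : MeasurableSet B :=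
    (measurableSet_lt measurable_const hτ_meas).inter (measurableSet_le hτ_meas measurable_const)
  have hint : Integrable (B.indicator fun _ => (1 : ℝ)) P := (integrable_const 1).indicator hBm
  have hpos := hτ_cond s t hs hst
  set h : Ω → ℝ := P[B.indicator (fun _ => (1 : ℝ)) | F T] with hh
  have h1 : ∫ ω in A, h ω ∂P = ∫ ω in A, B.indicator (fun _ => (1 : ℝ)) ω ∂P :=
    setIntegral_condExp hFT hint hA
  have hP' : 0 < P A := lt_of_le_of_ne zero_le (Ne.symm hP)
  have hsuppA : P A ≤ P (Function.support h ∩ A) := by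
    have hsub : A ⊆ (Function.support h ∩ A) ∪ {ω | ¬ 0 < h ω} := by
      intro ω hω
      by_cases hs' : 0 < h ω
      · exact Or.inl ⟨ne_of_gt hs', hω⟩
      · exact Or.inr hs'
    calc P A ≤ P ((Function.support h ∩ A) ∪ {ω | ¬ 0 < h ω}) := measure_mono hsub
      _ ≤ P (Function.support h ∩ A) + P {ω | ¬ 0 < h ω} := measure_union_le _ _
      _ = P (Function.support h ∩ A) := by
          have h0 : P {ω | ¬ 0 < h ω} = 0 := by
            have := hpos
            rw [MeasureTheory.ae_iff] at this
            simpa using this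
          rw [h0, add_zero]
  have h2 : 0 < ∫ ω in A, h ω ∂P := by
    rw [setIntegral_pos_iff_support_of_nonneg_ae
      (ae_restrict_of_ae (hpos.mono fun ω hω => hω.le)) integrable_condExp.integrableOn]
    exact lt_of_lt_of_le hP' hsuppA
  have h3 : ∫ ω in A, B.indicator (fun _ => (1 : ℝ)) ω ∂P = (P (A ∩ B)).toReal := by
    rw [setIntegral_indicator hBm, setIntegral_const, smul_eq_mul, mul_one]; rfl
  rw [h1, h3] at h2
  refine lt_of_le_of_ne zero_le fun h0 => ?_
  rw [← h0] at h2
  simp at h2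


lemma aux_F_le_enlarge {Ω : Type*} (F : ℝ → MeasurableSpace Ω) (τ : Ω → ℝ) (t : ℝ) :
    F t ≤ enlarge F τ t := le_sup_left

lemma aux_lt_tau_mem {Ω : Type*} (F : ℝ → MeasurableSpace Ω) (τ : Ω → ℝ) {t : ℝ}
    (ht0 : 0 ≤ t) : MeasurableSet[enlarge F τ t] {ω | t < τ ω} := by
  have h := (aux_tau_le_mem F τ ht0 (le_refl t)).compl
  have : {ω | τ ω ≤ t}ᶜ = {ω | t < τ ω} := by
    ext ω; simp [not_le]
  rwa [this] at h

lemma aux_L1 {Ω : Type*} [mΩ : MeasurableSpace Ω] (P : Measure Ω) [IsProbabilityMeasure P]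
    (T r : ℝ) (hT : 0 < T)
    (F : ℝ → MeasurableSpace Ω)
    (hF_mono : ∀ s t : ℝ, 0 ≤ s → s ≤ t → t ≤ T → F s ≤ F t)
    (τ : Ω → ℝ) (hτ_pos : ∀ ω, 0 < τ ω)
    (D : ℝ → Ω → ℝ)
    (hD_adapted : ∀ t ∈ Set.Icc (0 : ℝ) T, Measurable[enlarge F τ t] (D t))
    (hD_T : ∀ ω, D T ω = Set.indicator {ω' | T < τ ω'} (fun _ => (1 : ℝ)) ω)
    (hD_cont : ∀ ω, ContinuousOn (fun t => D t ω) (Set.Icc 0 T ∩ Set.Iio (τ ω)))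
    (hD_rc : ∀ ω, ∀ t ∈ Set.Icc (0 : ℝ) T, τ ω ≤ t →
      ContinuousWithinAt (fun t => D t ω) (Set.Ici t) t)
    (hNBDSA : NBDSA P F τ D r T)
    (t : ℝ) (ht0 : 0 ≤ t) (htT : t < T) :
    ∀ᵐ ω ∂P, τ ω ≤ t → D t ω = 0 := by
  classical
  by_contra hcon
  rw [MeasureTheory.ae_iff] at hcon
  set Ep := {ω | τ ω ≤ t ∧ 0 < D t ω} with hEp
  set En := {ω | τ ω ≤ t ∧ D t ω < 0} with hEn
  have hsub : {ω | ¬(τ ω ≤ t → D t ω = 0)} ⊆ Ep ∪ En := by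
    intro ω hω
    rw [Set.mem_setOf_eq, Classical.not_imp] at hω
    rcases lt_trichotomy (D t ω) 0 with h | h | h
    · exact Or.inr ⟨hω.1, h⟩
    · exact absurd h hω.2
    · exact Or.inl ⟨hω.1, h⟩
  have hpos : P Ep ≠ 0 ∨ P En ≠ 0 := by
    by_contra hc
    push_neg at hc
    have : P (Ep ∪ En) = 0 := measure_union_null hc.1 hc.2
    exact hcon (le_antisymm (le_trans (measure_mono hsub) this.le) zero_le)
  have hEpm : MeasurableSet[enlarge F τ t] Ep := by
    have h1 := aux_tau_le_mem F τ ht0 (le_refl t)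
    have h2 : MeasurableSet[enlarge F τ t] {ω | 0 < D t ω} :=
      hD_adapted t ⟨ht0, htT.le⟩ measurableSet_Ioi
    exact h1.inter h2
  have hEnm : MeasurableSet[enlarge F τ t] En := by
    have h1 := aux_tau_le_mem F τ ht0 (le_refl t)
    have h2 : MeasurableSet[enlarge F τ t] {ω | D t ω < 0} :=
      hD_adapted t ⟨ht0, htT.le⟩ measurableSet_Iio
    exact h1.inter h2
  have hind : ∀ ω, τ ω ≤ t → Set.indicator {ω' | T < τ ω'} (fun _ => (1 : ℝ)) ω = 0 := by
    intro ω hω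
    apply Set.indicator_of_notMem
    simp only [Set.mem_setOf_eq, not_lt]
    exact hω.trans htT.le
  rcases hpos with h | h
  · refine aux_arb P T r hT F hF_mono τ hτ_pos D hD_adapted hD_T hD_cont hD_rc hNBDSA
      t ht0 htT (Ep.indicator fun _ => (-1 : ℝ)) (measurable_const.indicator hEpm) ?_ ?_
    · refine Filter.Eventually.of_forall fun ω => ?_
      by_cases hω : ω ∈ Ep
      · rw [Set.indicator_of_mem hω, hind ω hω.1]
        have := hω.2
        have he := Real.exp_pos (r * (T - t))
        nlinarith
      · rw [Set.indicator_of_notMem hω]; ring_nf; exact le_refl 0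
    · refine lt_of_lt_of_le (lt_of_le_of_ne zero_le (Ne.symm h)) (measure_mono ?_)
      intro ω hω
      rw [Set.mem_setOf_eq, Set.indicator_of_mem hω, hind ω hω.1]
      have := hω.2
      have he := Real.exp_pos (r * (T - t))
      nlinarith
  · refine aux_arb P T r hT F hF_mono τ hτ_pos D hD_adapted hD_T hD_cont hD_rc hNBDSA
      t ht0 htT (En.indicator fun _ => (1 : ℝ)) (measurable_const.indicator hEnm) ?_ ?_
    · refine Filter.Eventually.of_forall fun ω => ?_
      by_cases hω : ω ∈ En
      · rw [Set.indicator_of_mem hω, hind ω hω.1]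
        have := hω.2
        have he := Real.exp_pos (r * (T - t))
        nlinarith
      · rw [Set.indicator_of_notMem hω]; ring_nf; exact le_refl 0
    · refine lt_of_lt_of_le (lt_of_le_of_ne zero_le (Ne.symm h)) (measure_mono ?_)
      intro ω hω
      rw [Set.mem_setOf_eq, Set.indicator_of_mem hω, hind ω hω.1]
      have := hω.2
      have he := Real.exp_pos (r * (T - t))
      nlinarith

lemma aux_L2 {Ω : Type*} [mΩ : MeasurableSpace Ω] (P : Measure Ω) [IsProbabilityMeasure P]
    (T r : ℝ) (hT : 0 < T) (hr : 0 ≤ r)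
    (F : ℝ → MeasurableSpace Ω)
    (hF_mono : ∀ s t : ℝ, 0 ≤ s → s ≤ t → t ≤ T → F s ≤ F t)
    (hF_le : ∀ t ∈ Set.Icc (0 : ℝ) T, F t ≤ mΩ)
    (τ : Ω → ℝ) (hτ_pos : ∀ ω, 0 < τ ω) (hτ_meas : Measurable τ)
    (hτ_cond : ∀ s t : ℝ, 0 ≤ s → s < t →
      ∀ᵐ ω ∂P, 0 < (P[Set.indicator {ω | s < τ ω ∧ τ ω ≤ t}
        (fun _ => (1 : ℝ)) | F T]) ω)
    (D : ℝ → Ω → ℝ)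
    (hD_adapted : ∀ t ∈ Set.Icc (0 : ℝ) T, Measurable[enlarge F τ t] (D t))
    (hD_T : ∀ ω, D T ω = Set.indicator {ω' | T < τ ω'} (fun _ => (1 : ℝ)) ω)
    (hD_cont : ∀ ω, ContinuousOn (fun t => D t ω) (Set.Icc 0 T ∩ Set.Iio (τ ω)))
    (hD_rc : ∀ ω, ∀ t ∈ Set.Icc (0 : ℝ) T, τ ω ≤ t →
      ContinuousWithinAt (fun t => D t ω) (Set.Ici t) t)
    (hNBDSA : NBDSA P F τ D r T)
    (t : ℝ) (ht0 : 0 ≤ t) (htT : t < T)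
    (f : Ω → ℝ) (hfm : Measurable[F t] f) (hf : ∀ ω, t < τ ω → D t ω = f ω) :
    ∀ᵐ ω ∂P, f ω ∈ Set.Ioo (0 : ℝ) 1 := by
  classical
  have hFT : F T ≤ mΩ := hF_le T ⟨hT.le, le_refl T⟩
  have hFtT : F t ≤ F T := hF_mono t T ht0 htT.le (le_refl T)
  have hTtau : ∀ ω, ω ∈ {ω' | T < τ ω'} → t < τ ω := fun ω hω => htT.trans hω
  have hlt : MeasurableSet[enlarge F τ t] {ω | t < τ ω} := aux_lt_tau_mem F τ ht0
  -- part (a) : P {f ≤ 0} = 0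
  have ha : P {ω | f ω ≤ 0} = 0 := by
    by_contra hA
    set A := {ω | f ω ≤ 0} with hAdef
    have hAt : MeasurableSet[F t] A := hfm measurableSet_Iic
    have hAT : MeasurableSet[F T] A := hFtT A hAt
    have hkey : 0 < P (A ∩ {ω | T < τ ω ∧ τ ω ≤ T + 1}) :=
      aux_key P T F hFT τ hτ_meas hτ_cond T (T + 1) hT.le (lt_add_one T) A hAT hA
    have hkey' : 0 < P (A ∩ {ω | T < τ ω}) := by
      refine lt_of_lt_of_le hkey (measure_mono fun ω hω => ⟨hω.1, hω.2.1⟩)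
    have hAe : MeasurableSet[enlarge F τ t] A := aux_F_le_enlarge F τ t A hAt
    refine aux_arb P T r hT F hF_mono τ hτ_pos D hD_adapted hD_T hD_cont hD_rc hNBDSA
      t ht0 htT ((A ∩ {ω | t < τ ω}).indicator fun _ => (1 : ℝ))
      (measurable_const.indicator (hAe.inter hlt)) ?_ ?_
    · refine Filter.Eventually.of_forall fun ω => ?_
      by_cases hω : ω ∈ A ∩ {ω | t < τ ω}
      · rw [Set.indicator_of_mem hω]
        have hDf : D t ω = f ω := hf ω hω.2
        have hfle : f ω ≤ 0 := hω.1
        have he := Real.exp_pos (r * (T - t))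
        have hind : (0:ℝ) ≤ Set.indicator {ω' | T < τ ω'} (fun _ => (1 : ℝ)) ω :=
          Set.indicator_nonneg (fun _ _ => zero_le_one) ω
        rw [hDf]
        nlinarith
      · rw [Set.indicator_of_notMem hω]; ring_nf; exact le_refl 0
    · refine lt_of_lt_of_le hkey' (measure_mono ?_)
      intro ω hω
      have hωt : t < τ ω := hTtau ω hω.2
      have hmem : ω ∈ A ∩ {ω | t < τ ω} := ⟨hω.1, hωt⟩
      rw [Set.mem_setOf_eq, Set.indicator_of_mem hmem]
      have hDf : D t ω = f ω := hf ω hωt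
      have hfle : f ω ≤ 0 := hω.1
      have he := Real.exp_pos (r * (T - t))
      have hind : Set.indicator {ω' | T < τ ω'} (fun _ => (1 : ℝ)) ω = 1 :=
        Set.indicator_of_mem hω.2 _
      rw [hDf, hind]
      nlinarith
  -- part (b) : P {exp(-(r(T-t))) ≤ f} = 0
  have hb : P {ω | Real.exp (-(r * (T - t))) ≤ f ω} = 0 := by
    by_contra hA
    set A := {ω | Real.exp (-(r * (T - t))) ≤ f ω} with hAdef
    have hAt : MeasurableSet[F t] A := hfm measurableSet_Ici
    have hAT : MeasurableSet[F T] A := hFtT A hAt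
    have hkey : 0 < P (A ∩ {ω | t < τ ω ∧ τ ω ≤ T}) :=
      aux_key P T F hFT τ hτ_meas hτ_cond t T ht0 htT A hAT hA
    have hAe : MeasurableSet[enlarge F τ t] A := aux_F_le_enlarge F τ t A hAt
    have hexpmul : Real.exp (-(r * (T - t))) * Real.exp (r * (T - t)) = 1 := by
      rw [← Real.exp_add, neg_add_cancel, Real.exp_zero]
    refine aux_arb P T r hT F hF_mono τ hτ_pos D hD_adapted hD_T hD_cont hD_rc hNBDSA
      t ht0 htT ((A ∩ {ω | t < τ ω}).indicator fun _ => (-1 : ℝ))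
      (measurable_const.indicator (hAe.inter hlt)) ?_ ?_
    · refine Filter.Eventually.of_forall fun ω => ?_
      by_cases hω : ω ∈ A ∩ {ω | t < τ ω}
      · rw [Set.indicator_of_mem hω]
        have hDf : D t ω = f ω := hf ω hω.2
        have hfge : Real.exp (-(r * (T - t))) ≤ f ω := hω.1
        have he := Real.exp_pos (r * (T - t))
        have h1 : (1:ℝ) ≤ f ω * Real.exp (r * (T - t)) := by
          calc (1:ℝ) = Real.exp (-(r * (T - t))) * Real.exp (r * (T - t)) := hexpmul.symm
            _ ≤ f ω * Real.exp (r * (T - t)) := by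
                exact mul_le_mul_of_nonneg_right hfge he.le
        have hind : Set.indicator {ω' | T < τ ω'} (fun _ => (1 : ℝ)) ω ≤ 1 :=
          Set.indicator_le_self' (fun _ _ => zero_le_one) ω
        rw [hDf]
        nlinarith
      · rw [Set.indicator_of_notMem hω]; ring_nf; exact le_refl 0
    · refine lt_of_lt_of_le hkey (measure_mono ?_)
      intro ω hω
      have hωt : t < τ ω := hω.2.1
      have hmem : ω ∈ A ∩ {ω | t < τ ω} := ⟨hω.1, hωt⟩
      rw [Set.mem_setOf_eq, Set.indicator_of_mem hmem]
      have hDf : D t ω = f ω := hf ω hωt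
      have hfge : Real.exp (-(r * (T - t))) ≤ f ω := hω.1
      have he := Real.exp_pos (r * (T - t))
      have h1 : (1:ℝ) ≤ f ω * Real.exp (r * (T - t)) := by
        calc (1:ℝ) = Real.exp (-(r * (T - t))) * Real.exp (r * (T - t)) := hexpmul.symm
          _ ≤ f ω * Real.exp (r * (T - t)) := mul_le_mul_of_nonneg_right hfge he.le
      have hind : Set.indicator {ω' | T < τ ω'} (fun _ => (1 : ℝ)) ω = 0 := by
        apply Set.indicator_of_notMem
        simp only [Set.mem_setOf_eq, not_lt]
        exact hω.2.2
      rw [hDf, hind]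
      nlinarith
  have hexp_le_one : Real.exp (-(r * (T - t))) ≤ 1 := by
    rw [← Real.exp_zero]
    apply Real.exp_le_exp.mpr
    nlinarith
  have h1 : ∀ᵐ ω ∂P, ω ∉ {ω | f ω ≤ 0} := (MeasureTheory.measure_eq_zero_iff_ae_notMem).1 ha
  have h2 : ∀ᵐ ω ∂P, ω ∉ {ω | Real.exp (-(r * (T - t))) ≤ f ω} :=
    (MeasureTheory.measure_eq_zero_iff_ae_notMem).1 hb
  filter_upwards [h1, h2] with ω hω1 hω2
  simp only [Set.mem_setOf_eq, not_le] at hω1 hω2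
  exact ⟨hω1, lt_of_lt_of_le hω2 hexp_le_one⟩

lemma aux_extension {Ω : Type*} (M : MeasurableSpace Ω) (T : ℝ) (hT : 0 < T)
    (fR : ℝ → Ω → ℝ) (hfRm : ∀ v ∈ Set.Icc (0 : ℝ) T, Measurable[M] (fR v)) :
    ∃ (W : Set Ω) (ext : ℝ → Ω → ℝ),
      MeasurableSet[M] W ∧
      (∀ v ∈ Set.Icc (0 : ℝ) T, Measurable[M] (ext v)) ∧
      (∀ ω ∈ W, ContinuousOn (fun v => ext v ω) (Set.Icc 0 T)) ∧
      (∀ ω (g : ℝ → ℝ), ContinuousOn g (Set.Icc 0 T) →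
        (∀ q : ℚ, (q : ℝ) ∈ Set.Icc (0 : ℝ) T → fR (q : ℝ) ω = g (q : ℝ)) →
        ω ∈ W ∧ ∀ v ∈ Set.Icc (0 : ℝ) T, ext v ω = g v) := by
  classical
  set Q : ℕ → ℝ → ℚ := fun n v => (⌊v * 2 ^ n⌋ : ℚ) / 2 ^ n with hQdef
  have hQcoe : ∀ (n : ℕ) (v : ℝ), ((Q n v : ℚ) : ℝ) = (⌊v * 2 ^ n⌋ : ℝ) / 2 ^ n := by
    intro n v
    rw [hQdef]
    push_cast
    ring
  have h2pos : ∀ n : ℕ, (0 : ℝ) < 2 ^ n := fun n => by positivity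
  have hQle : ∀ (n : ℕ) (v : ℝ), ((Q n v : ℚ) : ℝ) ≤ v := by
    intro n v
    rw [hQcoe, div_le_iff₀ (h2pos n)]
    exact Int.floor_le _
  have hQlb : ∀ (n : ℕ) (v : ℝ), v - 1 / 2 ^ n < ((Q n v : ℚ) : ℝ) := by
    intro n v
    rw [hQcoe, lt_div_iff₀ (h2pos n)]
    have h := Int.sub_one_lt_floor (v * 2 ^ n)
    have hmul : (1 / 2 ^ n : ℝ) * 2 ^ n = 1 := by
      field_simp
    calc (v - 1 / 2 ^ n) * 2 ^ n = v * 2 ^ n - 1 / 2 ^ n * 2 ^ n := by ring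
      _ = v * 2 ^ n - 1 := by rw [hmul]
      _ < (⌊v * 2 ^ n⌋ : ℝ) := h
  have hQ0 : ∀ (n : ℕ) (v : ℝ), 0 ≤ v → 0 ≤ ((Q n v : ℚ) : ℝ) := by
    intro n v hv
    rw [hQcoe]
    apply div_nonneg _ (h2pos n).le
    exact_mod_cast Int.floor_nonneg.2 (by positivity)
  have hQmem : ∀ (n : ℕ), ∀ v ∈ Set.Icc (0 : ℝ) T, ((Q n v : ℚ) : ℝ) ∈ Set.Icc (0 : ℝ) T :=
    fun n v hv => ⟨hQ0 n v hv.1, (hQle n v).trans hv.2⟩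
  have hpow0 : Filter.Tendsto (fun n : ℕ => (1 : ℝ) / 2 ^ n) Filter.atTop (nhds 0) := by
    have h := tendsto_pow_atTop_nhds_zero_of_lt_one (by norm_num : (0:ℝ) ≤ 1/2) (by norm_num)
    refine h.congr fun n => ?_
    rw [one_div_pow]
  have hQtend : ∀ v : ℝ, Filter.Tendsto (fun n => ((Q n v : ℚ) : ℝ)) Filter.atTop (nhds v) := by
    intro v
    have hlow : Filter.Tendsto (fun n : ℕ => v - 1 / 2 ^ n) Filter.atTop (nhds v) := by
      have := (tendsto_const_nhds (x := v) (f := Filter.atTop (α := ℕ))).sub hpow0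
      simpa using this
    exact tendsto_of_tendsto_of_tendsto_of_le_of_le hlow tendsto_const_nhds
      (fun n => (hQlb n v).le) (fun n => hQle n v)
  have hpowsmall : ∀ ε : ℝ, 0 < ε → ∃ N : ℕ, (1 : ℝ) / 2 ^ N < ε ∧
      ∀ n ≥ N, (1 : ℝ) / 2 ^ n < ε := by
    intro ε hε
    obtain ⟨N, hN⟩ := exists_pow_lt_of_lt_one hε (by norm_num : (1:ℝ)/2 < 1)
    rw [one_div_pow] at hN
    refine ⟨N, hN, fun n hn => lt_of_le_of_lt ?_ hN⟩
    apply one_div_le_one_div_of_le (h2pos N)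
    exact pow_le_pow_right₀ (by norm_num) hn
  set W : Set Ω := {ω | ∀ j : ℕ, ∃ k : ℕ, ∀ a b : ℚ,
    (a : ℝ) ∈ Set.Icc (0 : ℝ) T → (b : ℝ) ∈ Set.Icc (0 : ℝ) T →
    |(a : ℝ) - (b : ℝ)| ≤ 1 / (k + 1) → |fR (a : ℝ) ω - fR (b : ℝ) ω| ≤ 1 / (j + 1)} with hWdef
  have hWmeas : MeasurableSet[M] W := by
    have hWeq : W = ⋂ (j : ℕ), ⋃ (k : ℕ), ⋂ (a : ℚ), ⋂ (b : ℚ),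
        {ω | (a : ℝ) ∈ Set.Icc (0 : ℝ) T → (b : ℝ) ∈ Set.Icc (0 : ℝ) T →
          |(a : ℝ) - (b : ℝ)| ≤ 1 / (k + 1) → |fR (a : ℝ) ω - fR (b : ℝ) ω| ≤ 1 / (j + 1)} := by
      ext ω
      simp only [hWdef, Set.mem_setOf_eq, Set.mem_iInter, Set.mem_iUnion]
    rw [hWeq]
    refine MeasurableSet.iInter fun j => MeasurableSet.iUnion fun k =>
      MeasurableSet.iInter fun a => MeasurableSet.iInter fun b => ?_
    by_cases ha : (a : ℝ) ∈ Set.Icc (0 : ℝ) T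
    · by_cases hb : (b : ℝ) ∈ Set.Icc (0 : ℝ) T
      · by_cases hab : |(a : ℝ) - (b : ℝ)| ≤ 1 / ((k : ℝ) + 1)
        · have heq : {ω | (a : ℝ) ∈ Set.Icc (0 : ℝ) T → (b : ℝ) ∈ Set.Icc (0 : ℝ) T →
              |(a : ℝ) - (b : ℝ)| ≤ 1 / (k + 1) → |fR (a : ℝ) ω - fR (b : ℝ) ω| ≤ 1 / (j + 1)}
              = {ω | |fR (a : ℝ) ω - fR (b : ℝ) ω| ≤ 1 / (j + 1)} := by
            ext ω
            simp only [Set.mem_setOf_eq]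
            exact ⟨fun h => h ha hb hab, fun h _ _ _ => h⟩
          rw [heq]
          exact measurableSet_le (((hfRm _ ha).sub (hfRm _ hb)).abs) measurable_const
        · have heq : {ω | (a : ℝ) ∈ Set.Icc (0 : ℝ) T → (b : ℝ) ∈ Set.Icc (0 : ℝ) T →
              |(a : ℝ) - (b : ℝ)| ≤ 1 / (k + 1) → |fR (a : ℝ) ω - fR (b : ℝ) ω| ≤ 1 / (j + 1)}
              = Set.univ := by
            apply Set.eq_univ_iff_forall.2
            intro ω _ _ hab'
            exact absurd hab' hab
          rw [heq]; exact MeasurableSet.univ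
      · have heq : {ω | (a : ℝ) ∈ Set.Icc (0 : ℝ) T → (b : ℝ) ∈ Set.Icc (0 : ℝ) T →
            |(a : ℝ) - (b : ℝ)| ≤ 1 / (k + 1) → |fR (a : ℝ) ω - fR (b : ℝ) ω| ≤ 1 / (j + 1)}
            = Set.univ := by
          apply Set.eq_univ_iff_forall.2
          intro ω _ hb'
          exact absurd hb' hb
        rw [heq]; exact MeasurableSet.univ
    · have heq : {ω | (a : ℝ) ∈ Set.Icc (0 : ℝ) T → (b : ℝ) ∈ Set.Icc (0 : ℝ) T →
          |(a : ℝ) - (b : ℝ)| ≤ 1 / (k + 1) → |fR (a : ℝ) ω - fR (b : ℝ) ω| ≤ 1 / (j + 1)}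
          = Set.univ := by
        apply Set.eq_univ_iff_forall.2
        intro ω ha'
        exact absurd ha' ha
      rw [heq]; exact MeasurableSet.univ
  have hext0 : ∀ v ∈ Set.Icc (0 : ℝ) T, ∃ e : Ω → ℝ, Measurable[M] e ∧
      ∀ ω L, Filter.Tendsto (fun n => fR ((Q n v : ℚ) : ℝ) ω) Filter.atTop (nhds L) →
        e ω = L := by
    intro v hv
    exact aux_liminf M (fun n ω => fR ((Q n v : ℚ) : ℝ) ω) (fun n => hfRm _ (hQmem n v hv))
  choose! ext hextm hextlim using hext0
  have hconv : ∀ ω ∈ W, ∀ v ∈ Set.Icc (0 : ℝ) T,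
      ∃ L, Filter.Tendsto (fun n => fR ((Q n v : ℚ) : ℝ) ω) Filter.atTop (nhds L) := by
    intro ω hω v hv
    apply cauchySeq_tendsto_of_complete
    rw [Metric.cauchySeq_iff]
    intro ε hε
    obtain ⟨j, hj⟩ := exists_nat_one_div_lt hε
    obtain ⟨k, hk⟩ := hω j
    have hk1 : (0 : ℝ) < 1 / (2 * ((k : ℝ) + 1)) := by positivity
    obtain ⟨N, hN1, hN⟩ := hpowsmall _ hk1
    refine ⟨N, fun m hm n hn => ?_⟩
    rw [Real.dist_eq]
    refine lt_of_le_of_lt (hk (Q m v) (Q n v) (hQmem m v hv) (hQmem n v hv) ?_) hj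
    have h1 := hQle m v
    have h2 := hQlb m v
    have h3 := hQle n v
    have h4 := hQlb n v
    have h5 := hN m hm
    have h6 := hN n hn
    have hhalf : 1 / (2 * ((k : ℝ) + 1)) + 1 / (2 * ((k : ℝ) + 1)) = 1 / ((k : ℝ) + 1) := by
      have h2' : (2 : ℝ) / (2 * ((k : ℝ) + 1)) = 1 / ((k : ℝ) + 1) := by
        rw [← div_div]
        norm_num
      have h1' : 1 / (2 * ((k : ℝ) + 1)) + 1 / (2 * ((k : ℝ) + 1))
          = (2 : ℝ) / (2 * ((k : ℝ) + 1)) := by ring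
      rw [h1', h2']
    rw [abs_sub_le_iff]
    constructor <;> linarith
  have hest : ∀ ω ∈ W, ∀ j : ℕ, ∃ k : ℕ, ∀ u ∈ Set.Icc (0 : ℝ) T, ∀ v ∈ Set.Icc (0 : ℝ) T,
      |u - v| ≤ 1 / (2 * ((k : ℝ) + 1)) → |ext u ω - ext v ω| ≤ 1 / ((j : ℝ) + 1) := by
    intro ω hω j
    obtain ⟨k, hk⟩ := hω j
    refine ⟨k, fun u hu v hv huv => ?_⟩
    obtain ⟨Lu, hLu⟩ := hconv ω hω u hu
    obtain ⟨Lv, hLv⟩ := hconv ω hω v hv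
    rw [hextlim u hu ω Lu hLu, hextlim v hv ω Lv hLv]
    have habs : Filter.Tendsto (fun n => |fR ((Q n u : ℚ) : ℝ) ω - fR ((Q n v : ℚ) : ℝ) ω|)
        Filter.atTop (nhds |Lu - Lv|) := (hLu.sub hLv).abs
    refine le_of_tendsto habs ?_
    have hk4 : (0 : ℝ) < 1 / (4 * ((k : ℝ) + 1)) := by positivity
    obtain ⟨N, hN1, hN⟩ := hpowsmall _ hk4
    filter_upwards [Filter.eventually_ge_atTop N] with n hn
    refine hk (Q n u) (Q n v) (hQmem n u hu) (hQmem n v hv) ?_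
    have h1 := hQle n u
    have h2 := hQlb n u
    have h3 := hQle n v
    have h4 := hQlb n v
    have h5 := hN n hn
    have hquarter : 1 / (4 * ((k : ℝ) + 1)) + (1 / (2 * ((k : ℝ) + 1)) + 1 / (4 * ((k : ℝ) + 1)))
        = 1 / ((k : ℝ) + 1) := by
      have e1 : 1 / (4 * ((k : ℝ) + 1)) + (1 / (2 * ((k : ℝ) + 1)) + 1 / (4 * ((k : ℝ) + 1)))
          = (2 : ℝ) / (4 * ((k : ℝ) + 1)) + 1 / (2 * ((k : ℝ) + 1)) := by ring
      have e2 : (2 : ℝ) / (4 * ((k : ℝ) + 1)) = 1 / (2 * ((k : ℝ) + 1)) := by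
        rw [show (4 : ℝ) * ((k : ℝ) + 1) = 2 * (2 * ((k : ℝ) + 1)) by ring, ← div_div]
        norm_num
      have e3 : 1 / (2 * ((k : ℝ) + 1)) + 1 / (2 * ((k : ℝ) + 1))
          = (2 : ℝ) / (2 * ((k : ℝ) + 1)) := by ring
      have e4 : (2 : ℝ) / (2 * ((k : ℝ) + 1)) = 1 / ((k : ℝ) + 1) := by
        rw [← div_div]
        norm_num
      rw [e1, e2, e3, e4]
    rw [abs_le] at huv ⊢
    constructor
    · linarith [huv.1, huv.2]
    · linarith [huv.1, huv.2]
  refine ⟨W, ext, hWmeas, hextm, ?_, ?_⟩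
  · -- continuity on W
    intro ω hω v hv
    rw [Metric.continuousWithinAt_iff]
    intro ε hε
    obtain ⟨j, hj⟩ := exists_nat_one_div_lt hε
    obtain ⟨k, hk⟩ := hest ω hω j
    refine ⟨1 / (2 * ((k : ℝ) + 1)), by positivity, fun u hu hud => ?_⟩
    rw [Real.dist_eq] at hud ⊢
    exact lt_of_le_of_lt (hk u hu v hv hud.le) hj
  · -- characterization
    intro ω g hg hagree
    have hωW : ω ∈ W := by
      rw [hWdef, Set.mem_setOf_eq]
      intro j
      have hUC := isCompact_Icc.uniformContinuousOn_of_continuous hg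
      rw [Metric.uniformContinuousOn_iff] at hUC
      have hjpos : (0 : ℝ) < 1 / ((j : ℝ) + 1) := by positivity
      obtain ⟨δ, hδ, hδ'⟩ := hUC _ hjpos
      obtain ⟨k, hk⟩ := exists_nat_one_div_lt hδ
      refine ⟨k, fun a b ha hb hab => ?_⟩
      rw [hagree a ha, hagree b hb]
      have := hδ' _ ha _ hb (by rw [Real.dist_eq]; exact lt_of_le_of_lt hab hk)
      rw [Real.dist_eq] at this
      exact this.le
    refine ⟨hωW, fun v hv => ?_⟩
    have hgt : Filter.Tendsto (fun n => g ((Q n v : ℚ) : ℝ)) Filter.atTop (nhds (g v)) := by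
      have hgv := (hg v hv)
      have hQw : Filter.Tendsto (fun n => ((Q n v : ℚ) : ℝ)) Filter.atTop
          (nhdsWithin v (Set.Icc 0 T)) := by
        apply tendsto_nhdsWithin_of_tendsto_nhds_of_eventually_within _ (hQtend v)
        exact Filter.Eventually.of_forall fun n => hQmem n v hv
      exact hgv.tendsto.comp hQw
    have hft : Filter.Tendsto (fun n => fR ((Q n v : ℚ) : ℝ) ω) Filter.atTop (nhds (g v)) := by
      refine hgt.congr fun n => ?_
      rw [hagree (Q n v) (hQmem n v hv)]
    exact hextlim v hv ω (g v) hft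

/-- Suppose the NBDSA principle holds.  Then there exists an
`(F_t)_{t∈[0,T]}`-adapted process `c` with all paths continuous such that
`c(t) ∈ (0,1)` a.s. for every `t ∈ [0,T)`, `c(T) = 1`, and for every `t ∈ [0,T]`,
`D(t,T) = c(t)·1_{{t<τ}}` `P`-a.s. -/
theorem stmt6 {Ω : Type*} [mΩ : MeasurableSpace Ω] (P : Measure Ω)
    [IsProbabilityMeasure P] (T r : ℝ) (hT : 0 < T) (hr : 0 ≤ r)
    (F : ℝ → MeasurableSpace Ω)
    (hF_mono : ∀ s t : ℝ, 0 ≤ s → s ≤ t → t ≤ T → F s ≤ F t)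
    (hF_le : ∀ t ∈ Set.Icc (0 : ℝ) T, F t ≤ mΩ)
    (hF_null : ∀ t ∈ Set.Icc (0 : ℝ) T, ∀ A : Set Ω,
      MeasurableSet[mΩ] A → P A = 0 → MeasurableSet[F t] A)
    (τ : Ω → ℝ) (hτ_pos : ∀ ω, 0 < τ ω) (hτ_meas : Measurable τ)
    (hτ_cond : ∀ s t : ℝ, 0 ≤ s → s < t →
      ∀ᵐ ω ∂P, 0 < (P[Set.indicator {ω | s < τ ω ∧ τ ω ≤ t}
        (fun _ => (1 : ℝ)) | F T]) ω)
    (D : ℝ → Ω → ℝ)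
    (hD_adapted : ∀ t ∈ Set.Icc (0 : ℝ) T, Measurable[enlarge F τ t] (D t))
    (hD_T : ∀ ω, D T ω = Set.indicator {ω' | T < τ ω'} (fun _ => (1 : ℝ)) ω)
    (hD_cont : ∀ ω, ContinuousOn (fun t => D t ω) (Set.Icc 0 T ∩ Set.Iio (τ ω)))
    (hD_rc : ∀ ω, ∀ t ∈ Set.Icc (0 : ℝ) T, τ ω ≤ t →
      ContinuousWithinAt (fun t => D t ω) (Set.Ici t) t)
    (hNBDSA : NBDSA P F τ D r T) :
    ∃ c : ℝ → Ω → ℝ,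
      (∀ t ∈ Set.Icc (0 : ℝ) T, Measurable[F t] (c t)) ∧
      (∀ ω, ContinuousOn (fun t => c t ω) (Set.Icc (0 : ℝ) T)) ∧
      (∀ t : ℝ, 0 ≤ t → t < T → ∀ᵐ ω ∂P, c t ω ∈ Set.Ioo (0 : ℝ) 1) ∧
      (∀ ω, c T ω = 1) ∧
      (∀ t ∈ Set.Icc (0 : ℝ) T, ∀ᵐ ω ∂P,
        D t ω = Set.indicator {ω' | t < τ ω'} (c t) ω) := by
  classical
  have hFT : F T ≤ mΩ := hF_le T ⟨hT.le, le_refl T⟩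
  have hproj : ∀ t ∈ Set.Icc (0 : ℝ) T, ∃ f : Ω → ℝ, Measurable[F t] f ∧
      ∀ ω, t < τ ω → D t ω = f ω := fun t ht => aux_proj (hD_adapted t ht)
  choose! fR hfRm hfReq using hproj
  have hfRT : ∀ v ∈ Set.Icc (0 : ℝ) T, Measurable[F T] (fR v) := fun v hv =>
    (hfRm v hv).mono (hF_mono v T hv.1 hv.2 le_rfl) le_rfl
  obtain ⟨W, ext, hWmeas, hextm, hextcont, hextchar⟩ := aux_extension (F T) T hT fR hfRT
  have hTmem : (T : ℝ) ∈ Set.Icc (0 : ℝ) T := ⟨hT.le, le_rfl⟩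
  have hsurv : ∀ ω, T < τ ω → ω ∈ W ∧ ∀ v ∈ Set.Icc (0 : ℝ) T, ext v ω = D v ω := by
    intro ω hω
    have hcont : ContinuousOn (fun v => D v ω) (Set.Icc 0 T) := by
      apply (hD_cont ω).mono
      intro u hu
      exact ⟨hu, lt_of_le_of_lt hu.2 hω⟩
    have hagree : ∀ q : ℚ, (q : ℝ) ∈ Set.Icc (0 : ℝ) T → fR (q : ℝ) ω = D (q : ℝ) ω :=
      fun q hq => (hfReq (q : ℝ) hq ω (lt_of_le_of_lt hq.2 hω)).symm
    exact hextchar ω (fun v => D v ω) hcont hagree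
  set c : ℝ → Ω → ℝ := fun v ω => if ω ∈ W then ext v ω + (v / T) * (1 - ext T ω)
    else Real.exp (v - T) with hcdef
  have hcD : ∀ ω, T < τ ω → ∀ v ∈ Set.Icc (0 : ℝ) T, c v ω = D v ω := by
    intro ω hω v hv
    obtain ⟨hωW, hxt⟩ := hsurv ω hω
    have hDT1 : D T ω = 1 := by
      rw [hD_T ω]
      rw [Set.indicator_of_mem (show ω ∈ {ω' | T < τ ω'} from hω)]
    show (if ω ∈ W then ext v ω + (v / T) * (1 - ext T ω) else Real.exp (v - T)) = D v ω
    rw [if_pos hωW, hxt v hv, hxt T hTmem, hDT1]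
    ring
  have hcT1 : ∀ ω, c T ω = 1 := by
    intro ω
    show (if ω ∈ W then ext T ω + (T / T) * (1 - ext T ω) else Real.exp (T - T)) = 1
    split_ifs with h
    · rw [div_self (ne_of_gt hT)]
      ring
    · rw [sub_self, Real.exp_zero]
  have hcFT : ∀ v ∈ Set.Icc (0 : ℝ) T, Measurable[F T] (c v) := by
    intro v hv
    apply Measurable.ite hWmeas
    · exact (hextm v hv).add (measurable_const.mul (measurable_const.sub (hextm T hTmem)))
    · exact measurable_const
  have htrick : ∀ E : Set Ω, MeasurableSet[F T] E → P (E ∩ {ω | T < τ ω}) = 0 → P E = 0 := by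
    intro E hE hE0
    by_contra hne
    have hkey := aux_key P T F hFT τ hτ_meas hτ_cond T (T + 1) hT.le (lt_add_one T) E hE hne
    have hsub : E ∩ {ω | T < τ ω ∧ τ ω ≤ T + 1} ⊆ E ∩ {ω | T < τ ω} :=
      fun ω hω => ⟨hω.1, hω.2.1⟩
    have hlt := lt_of_lt_of_le hkey (measure_mono hsub)
    rw [hE0] at hlt
    exact lt_irrefl _ hlt
  have hEdef : ∀ t : ℝ, {ω | c t ω ≠ fR t ω} = (fun ω => c t ω - fR t ω) ⁻¹' ({0}ᶜ) := by
    intro t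
    ext ω
    simp [sub_eq_zero]
  have hcfr : ∀ t ∈ Set.Icc (0 : ℝ) T, P {ω | c t ω ≠ fR t ω} = 0 := by
    intro t ht
    apply htrick
    · rw [hEdef t]
      exact ((hcFT t ht).sub (hfRT t ht)) (measurableSet_singleton 0).compl
    · have hempty : {ω | c t ω ≠ fR t ω} ∩ {ω | T < τ ω} = ∅ := by
        ext ω
        simp only [Set.mem_inter_iff, Set.mem_setOf_eq, Set.mem_empty_iff_false, iff_false,
          not_and]
        intro hne hω
        apply hne
        rw [hcD ω hω t ht]
        exact hfReq t ht ω (lt_of_le_of_lt ht.2 hω)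
      rw [hempty]
      exact measure_empty
  refine ⟨c, ?_, ?_, ?_, hcT1, ?_⟩
  · -- measurability
    intro t ht
    have hnull := hcfr t ht
    have hEm : MeasurableSet[mΩ] {ω | c t ω ≠ fR t ω} := by
      rw [hEdef t]
      exact (((hcFT t ht).mono hFT le_rfl).sub ((hfRm t ht).mono (hF_le t ht) le_rfl))
        (measurableSet_singleton 0).compl
    have hEFt : MeasurableSet[F t] {ω | c t ω ≠ fR t ω} := hF_null t ht _ hEm hnull
    intro s hs
    have hsplit : c t ⁻¹' s = ((fR t ⁻¹' s) \ {ω | c t ω ≠ fR t ω})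
        ∪ ((c t ⁻¹' s) ∩ {ω | c t ω ≠ fR t ω}) := by
      ext ω
      simp only [Set.mem_union, Set.mem_diff, Set.mem_inter_iff, Set.mem_preimage,
        Set.mem_setOf_eq]
      by_cases he : c t ω = fR t ω
      · constructor
        · intro hω
          exact Or.inl ⟨he ▸ hω, fun hne => hne he⟩
        · rintro (⟨h1, _⟩ | ⟨h1, _⟩)
          · rw [he]; exact h1
          · exact h1
      · constructor
        · intro hω
          exact Or.inr ⟨hω, he⟩
        · rintro (⟨_, h2⟩ | ⟨h1, _⟩)
          · exact absurd (not_not.1 h2) he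
          · exact h1
    rw [hsplit]
    refine MeasurableSet.union ((hfRm t ht hs).diff hEFt) ?_
    refine hF_null t ht _ ?_ ?_
    · exact (((hcFT t ht).mono hFT le_rfl) hs).inter hEm
    · exact measure_mono_null Set.inter_subset_right hnull
  · -- continuity
    intro ω
    by_cases hω : ω ∈ W
    · have heq : (fun v => c v ω) = fun v => ext v ω + (v / T) * (1 - ext T ω) := by
        funext v
        show (if ω ∈ W then ext v ω + (v / T) * (1 - ext T ω) else Real.exp (v - T)) = _
        rw [if_pos hω]
      rw [heq]
      exact (hextcont ω hω).add
        (Continuous.continuousOn (by fun_prop))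
    · have heq : (fun v => c v ω) = fun v => Real.exp (v - T) := by
        funext v
        show (if ω ∈ W then ext v ω + (v / T) * (1 - ext T ω) else Real.exp (v - T)) = _
        rw [if_neg hω]
      rw [heq]
      exact Continuous.continuousOn (by fun_prop)
  · -- values in (0,1)
    intro t ht0 htT
    have htmem : t ∈ Set.Icc (0 : ℝ) T := ⟨ht0, htT.le⟩
    have hL2 := aux_L2 P T r hT hr F hF_mono hF_le τ hτ_pos hτ_meas hτ_cond D hD_adapted
      hD_T hD_cont hD_rc hNBDSA t ht0 htT (fR t) (hfRm t htmem)
      (fun ω h => hfReq t htmem ω h)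
    have hfRnull : P {ω | fR t ω ∉ Set.Ioo (0 : ℝ) 1} = 0 := by
      have := (MeasureTheory.ae_iff).1 hL2
      exact this
    have hE' : P {ω | c t ω ∉ Set.Ioo (0 : ℝ) 1} = 0 := by
      apply htrick
      · have : {ω | c t ω ∉ Set.Ioo (0 : ℝ) 1} = ((c t) ⁻¹' (Set.Ioo (0 : ℝ) 1))ᶜ := by
          ext ω; simp
        rw [this]
        exact ((hcFT t htmem) measurableSet_Ioo).compl
      · refine measure_mono_null ?_ hfRnull
        intro ω hω
        have hT' : T < τ ω := hω.2
        have h1 : c t ω = fR t ω := by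
          rw [hcD ω hT' t htmem]
          exact hfReq t htmem ω (lt_of_le_of_lt htT.le hT')
        simp only [Set.mem_setOf_eq] at hω ⊢
        rw [← h1]
        exact hω.1
    rw [MeasureTheory.ae_iff]
    exact hE'
  · -- product formula
    intro t ht
    by_cases htT : t = T
    · subst htT
      refine Filter.Eventually.of_forall fun ω => ?_
      rw [hD_T ω]
      by_cases hω : ω ∈ {ω' | t < τ ω'}
      · rw [Set.indicator_of_mem hω, Set.indicator_of_mem hω, hcT1 ω]
      · rw [Set.indicator_of_notMem hω, Set.indicator_of_notMem hω]
    · have htT' : t < T := lt_of_le_of_ne ht.2 htT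
      have hzero : ∀ᵐ ω ∂P, τ ω ≤ t → D t ω = 0 :=
        aux_L1 P T r hT F hF_mono τ hτ_pos D hD_adapted hD_T hD_cont hD_rc hNBDSA
          t ht.1 htT'
      have hae : ∀ᵐ ω ∂P, c t ω = fR t ω := by
        rw [MeasureTheory.ae_iff]
        have heq : {ω | ¬ c t ω = fR t ω} = {ω | c t ω ≠ fR t ω} := rfl
        rw [heq]
        exact hcfr t ht
      filter_upwards [hzero, hae] with ω h1 h2
      by_cases hτω : t < τ ω
      · rw [Set.indicator_of_mem (show ω ∈ {ω' | t < τ ω'} from hτω), h2]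
        exact hfReq t ht ω hτω
      · rw [Set.indicator_of_notMem (show ω ∉ {ω' | t < τ ω'} from hτω)]
        exact h1 (not_lt.1 hτω)
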